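/- arXiv:0811.2708 — 2 statements merged into one kernel-verified Lean document; each statement's English description precedes it below -/
import Mathlib

section
/- For all integers n ≥ 1 and ℓ, ℓ' ≥ 1, the dimension formula d_{ℓ,ℓ'} = n · ((ℓ+ℓ'+n)/(ℓ·ℓ')) · C(ℓ+n-1, ℓ-1) · C(ℓ'+n-1, ℓ'-1) defines a positive integer; equivalently, ℓ·ℓ' divides n·(ℓ+ℓ'+n)·C(ℓ+n-1, ℓ-1)·C(ℓ'+n-1, ℓ'-1). -/
/-- The dimension `d_{ℓ,ℓ'} = n ((ℓ+ℓ'+n)/(ℓℓ')) C(ℓ+n-1,ℓ-1) C(ℓ'+n-1,ℓ'-1)` of the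
bigraded spherical harmonic space is a positive integer: `ℓ ℓ'` divides the numerator. -/
theorem stmt3 (n ℓ ℓ' : ℕ) (hn : 1 ≤ n) (h1 : 1 ≤ ℓ) (h2 : 1 ≤ ℓ') :
    ℓ * ℓ' ∣ n * (ℓ + ℓ' + n) * Nat.choose (ℓ + n - 1) (ℓ - 1)
      * Nat.choose (ℓ' + n - 1) (ℓ' - 1) := by
  obtain ⟨a, rfl⟩ : ∃ a, ℓ = a + 1 := ⟨ℓ - 1, by omega⟩
  obtain ⟨b, rfl⟩ : ∃ b, ℓ' = b + 1 := ⟨ℓ' - 1, by omega⟩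
  have e1 : a + 1 + n - 1 = a + n := by omega
  have e2 : b + 1 + n - 1 = b + n := by omega
  simp only [e1, e2, Nat.add_sub_cancel]
  -- key recurrences
  have L1 : Nat.choose (a + n) (a + 1) * (a + 1) = Nat.choose (a + n) a * n := by
    have := Nat.choose_succ_right_eq (a + n) a
    simpa using this
  have L2 : Nat.choose (b + n) (b + 1) * (b + 1) = Nat.choose (b + n) b * n := by
    have := Nat.choose_succ_right_eq (b + n) b
    simpa using this
  have L3 : (b + n + 1) * Nat.choose (b + n) b = Nat.choose (b + n + 1) (b + 1) * (b + 1) := by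
    exact Nat.add_one_mul_choose_eq (b + n) b
  refine ⟨Nat.choose (b + n) (b + 1) * Nat.choose (a + n) a
    + Nat.choose (a + n) (a + 1) * Nat.choose (b + n + 1) (b + 1), ?_⟩
  zify at L1 L2 L3 ⊢
  linear_combination (-((a : ℤ) + 1)) * (Nat.choose (a + n) a : ℤ) * L2
    - ((b : ℤ) + 1) * (Nat.choose (b + n + 1) (b + 1) : ℤ) * L1
    + (n : ℤ) * (Nat.choose (a + n) a : ℤ) * L3
end

section
/- For each fixed integer n ≥ 1 and each x ∈ ℝ, with N → ∞ the Mehler–Heine limit holds: cos^{N - (n-1) - k}(x/√(N-(n-1)-k)) · P_k^{(n-1, N-(n-1)-k)}(cos(2x/√(N-(n-1)-k))) → L_k^{n-1}(x²) · e^{-x²/2}, where P_k^{(α,β)} is the Jacobi polynomial and L_k^{α} the Laguerre polynomial. -/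
open Filter Finset

/-- Generalized binomial coefficient `(a choose m) = a(a-1)⋯(a-m+1)/m!` for real `a`. -/
noncomputable def genBinom (a : ℝ) (m : ℕ) : ℝ :=
  (∏ i ∈ Finset.range m, (a - (i : ℝ))) / (m.factorial : ℝ)

/-- The Jacobi polynomial `P_k^{(a,b)}(x)`. -/
noncomputable def jacobiP (a b : ℝ) (k : ℕ) (x : ℝ) : ℝ :=
  ∑ s ∈ Finset.range (k + 1),
    genBinom (a + k) (k - s) * genBinom (b + k) s *
      ((x - 1) / 2) ^ s * ((x + 1) / 2) ^ (k - s)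

/-- The generalized Laguerre polynomial `L_k^{a}(x)`. -/
noncomputable def laguerreL (a : ℝ) (k : ℕ) (x : ℝ) : ℝ :=
  ∑ i ∈ Finset.range (k + 1),
    (-1 : ℝ) ^ i * genBinom (a + k) (k - i) * x ^ i / (i.factorial : ℝ)

lemma mh_log1p : Tendsto (fun u : ℝ => Real.log (1 + u) / u) (nhdsWithin 0 {0}ᶜ) (nhds 1) := by
  have h := (Real.hasDerivAt_log (one_ne_zero)).tendsto_slope_zero
  simp only [smul_eq_mul, Real.log_one, sub_zero, inv_one] at h
  exact h.congr (fun u => by rw [inv_mul_eq_div])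

lemma mh_sindiv : Tendsto (fun u : ℝ => Real.sin u / u) (nhdsWithin 0 {0}ᶜ) (nhds 1) := by
  have h := (Real.hasDerivAt_sin 0).tendsto_slope_zero
  simp only [smul_eq_mul, Real.sin_zero, sub_zero, zero_add, Real.cos_zero] at h
  exact h.congr (fun u => by rw [inv_mul_eq_div])

lemma mh_sqrtAtTop : Tendsto Real.sqrt atTop atTop := by
  rw [tendsto_atTop_atTop]
  intro b
  refine ⟨b ^ 2, fun a ha => ?_⟩
  calc b ≤ |b| := le_abs_self b
    _ = Real.sqrt (b ^ 2) := (Real.sqrt_sq_eq_abs b).symm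
    _ ≤ Real.sqrt a := Real.sqrt_le_sqrt ha

lemma mh_jacobi_one (a b : ℝ) (k : ℕ) : jacobiP a b k 1 = genBinom (a + k) k := by
  unfold jacobiP
  rw [Finset.sum_eq_single 0]
  · simp [genBinom]
  · intro s hs hs0
    norm_num [zero_pow hs0]
  · simp

/-- The Mehler–Heine limit: with `j - k = n - 1` fixed,
`cos^{N-(n-1)-k}(x/√(N-(n-1)-k)) P_k^{(n-1, N-(n-1)-k)}(cos(2x/√(N-(n-1)-k)))`
tends to `L_k^{n-1}(x²) e^{-x²/2}` as `N → ∞`. -/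
theorem stmt12 (n k : ℕ) (hn : 1 ≤ n) (x : ℝ) :
    Tendsto (fun N : ℕ =>
        Real.cos (x / Real.sqrt ((N : ℝ) - ((n : ℝ) - 1) - (k : ℝ))) ^ (N - (n - 1) - k) *
          jacobiP ((n : ℝ) - 1) ((N : ℝ) - ((n : ℝ) - 1) - (k : ℝ)) k
            (Real.cos (2 * x / Real.sqrt ((N : ℝ) - ((n : ℝ) - 1) - (k : ℝ)))))
      atTop
      (nhds (laguerreL ((n : ℝ) - 1) k (x ^ 2) * Real.exp (-(x ^ 2) / 2))) := by
  set a : ℝ := (n : ℝ) - 1 with ha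
  set c : ℕ → ℝ := fun N => (N : ℝ) - ((n : ℝ) - 1) - (k : ℝ) with hcdef
  set t : ℕ → ℝ := fun N => x / Real.sqrt (c N) with htdef
  have hc : Tendsto c atTop atTop := by
    have h1 : Tendsto (fun N : ℕ => (N : ℝ)) atTop atTop := tendsto_natCast_atTop_atTop
    have := tendsto_atTop_add_const_right atTop (-(((n : ℝ) - 1) + (k : ℝ))) h1
    refine this.congr (fun N => by simp only [hcdef]; ring)
  have hsc : Tendsto (fun N => Real.sqrt (c N)) atTop atTop := mh_sqrtAtTop.comp hc
  have ht0 : Tendsto t atTop (nhds 0) := Tendsto.div_atTop tendsto_const_nhds hsc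
  -- case x = 0 : the function is constant in N
  rcases eq_or_ne x 0 with rfl | hx
  · have hval : laguerreL a k ((0 : ℝ) ^ 2) * Real.exp (-((0:ℝ) ^ 2) / 2)
        = genBinom (a + k) k := by
      unfold laguerreL
      rw [Finset.sum_eq_single 0]
      · simp [genBinom]
      · intro i hi hi0
        simp [zero_pow hi0]
      · simp
    rw [hval]
    refine tendsto_const_nhds.congr (fun N => ?_)
    simp [mh_jacobi_one]
  -- main case x ≠ 0
  have hscpos : ∀ᶠ N in atTop, 0 < Real.sqrt (c N) := hsc.eventually_gt_atTop 0
  -- c N * sin (t N) ^ 2 → x ^ 2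
  have hbsin : Tendsto (fun N => c N * Real.sin (t N) ^ 2) atTop (nhds (x ^ 2)) := by
    have hxy : Tendsto (fun y : ℝ => x / y) atTop (nhdsWithin 0 {0}ᶜ) := by
      rw [tendsto_nhdsWithin_iff]
      constructor
      · exact Tendsto.div_atTop tendsto_const_nhds tendsto_id
      · filter_upwards [eventually_gt_atTop (0:ℝ)] with y hy
        simp only [Set.mem_compl_iff, Set.mem_singleton_iff]
        exact div_ne_zero hx (ne_of_gt hy)
    have hkey : Tendsto (fun y : ℝ => y * Real.sin (x / y)) atTop (nhds x) := by
      have h1 := (mh_sindiv.comp hxy).const_mul x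
      simp only [Function.comp] at h1
      rw [mul_one] at h1
      refine h1.congr' ?_
      filter_upwards [eventually_gt_atTop (0:ℝ)] with y hy
      field_simp
    have h2 := (hkey.comp hsc).pow 2
    simp only [Function.comp] at h2
    refine h2.congr' ?_
    filter_upwards [hscpos] with N hN
    rw [mul_pow, Real.sq_sqrt (Real.sqrt_pos.mp hN).le]
  have hsin0 : Tendsto (fun N => Real.sin (t N) ^ 2) atTop (nhds 0) := by
    have := ((Real.continuous_sin.tendsto 0).comp ht0).pow 2
    simpa using this
  have hcos1 : Tendsto (fun N => Real.cos (t N)) atTop (nhds 1) := by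
    have := (Real.continuous_cos.tendsto 0).comp ht0
    rw [Real.cos_zero] at this
    exact this
  have hsinne : ∀ᶠ N in atTop, Real.sin (t N) ≠ 0 := by
    have habs : ∀ᶠ N in atTop, |t N| < Real.pi := by
      have h := ht0.eventually (Metric.ball_mem_nhds (0:ℝ) Real.pi_pos)
      filter_upwards [h] with N hN
      simpa [Real.dist_eq] using hN
    filter_upwards [habs, hscpos] with N h1 h2
    have htne : t N ≠ 0 := div_ne_zero hx (ne_of_gt h2)
    rw [Ne, Real.sin_eq_zero_iff_of_lt_of_lt (abs_lt.mp h1).1 (abs_lt.mp h1).2]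
    exact htne
  have hcpos : ∀ᶠ N in atTop, 0 < Real.cos (t N) :=
    hcos1.eventually (eventually_gt_nhds zero_lt_one)
  have hcast : ∀ᶠ N : ℕ in atTop, ((N - (n - 1) - k : ℕ) : ℝ) = c N := by
    filter_upwards [eventually_ge_atTop ((n - 1) + k)] with N hN
    have h1 : (N - (n - 1) - k : ℕ) = N - ((n - 1) + k) := by omega
    rw [h1, Nat.cast_sub hN, Nat.cast_add, Nat.cast_sub hn]
    simp only [hcdef]
    push_cast
    ring
  -- the cosine power factor
  have hcospow : Tendsto (fun N : ℕ => Real.cos (t N) ^ (N - (n - 1) - k)) atTop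
      (nhds (Real.exp (-(x ^ 2) / 2))) := by
    have hneg : Tendsto (fun N => -(Real.sin (t N) ^ 2)) atTop (nhdsWithin 0 {0}ᶜ) := by
      rw [tendsto_nhdsWithin_iff]
      refine ⟨by simpa using hsin0.neg, ?_⟩
      filter_upwards [hsinne] with N h
      simp only [Set.mem_compl_iff, Set.mem_singleton_iff, neg_eq_zero]
      exact pow_ne_zero _ h
    have hl := mh_log1p.comp hneg
    simp only [Function.comp_def] at hl
    have hmain := (hbsin.mul hl).const_mul (-(1:ℝ)/2)
    have hlog : Tendsto (fun N => c N * Real.log (Real.cos (t N))) atTop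
        (nhds (-(x ^ 2) / 2)) := by
      have hval : (-(1:ℝ)/2) * (x ^ 2 * 1) = -(x ^ 2) / 2 := by ring
      rw [← hval]
      refine hmain.congr' ?_
      filter_upwards [hsinne, hcpos] with N hs hcp
      have hsq : 1 - Real.sin (t N) ^ 2 = Real.cos (t N) ^ 2 := by
        have := Real.sin_sq_add_cos_sq (t N); linarith
      have h2 : Real.log (Real.cos (t N)) = (1/2) * Real.log (1 + -(Real.sin (t N) ^ 2)) := by
        rw [show (1:ℝ) + -(Real.sin (t N) ^ 2) = Real.cos (t N) ^ 2 by linarith [hsq],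
          Real.log_pow]
        push_cast
        ring
      rw [h2]
      have hs2 : Real.sin (t N) ^ 2 ≠ 0 := pow_ne_zero _ hs
      field_simp
    have hexp := (Real.continuous_exp.tendsto _).comp hlog
    refine hexp.congr' ?_
    filter_upwards [hcpos, hcast] with N hcp hca
    simp only [Function.comp]
    rw [← hca, Real.exp_nat_mul, Real.exp_log hcp]
  -- the Jacobi polynomial factor
  have hjac : Tendsto (fun N => jacobiP a (c N) k (Real.cos (2 * x / Real.sqrt (c N)))) atTop
      (nhds (laguerreL a k (x ^ 2))) := by
    unfold jacobiP laguerreL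
    refine tendsto_finset_sum _ (fun s hs => ?_)
    -- each summand
    have hA : Tendsto (fun N => genBinom (c N + k) s * (Real.sin (t N) ^ 2) ^ s) atTop
        (nhds ((x ^ 2) ^ s / (s.factorial : ℝ))) := by
      have hfac : ∀ i : ℕ, Tendsto (fun N => (c N + k - i) * Real.sin (t N) ^ 2) atTop
          (nhds (x ^ 2)) := by
        intro i
        have h1 := hbsin.add (hsin0.const_mul ((k : ℝ) - i))
        rw [mul_zero, add_zero] at h1
        refine h1.congr (fun N => by ring)
      have hprod := tendsto_finset_prod (Finset.range s)
        (fun i (_ : i ∈ Finset.range s) => hfac i)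
      rw [Finset.prod_const, Finset.card_range] at hprod
      have := hprod.div_const (s.factorial : ℝ)
      refine this.congr (fun N => ?_)
      simp only [genBinom]
      rw [div_mul_eq_mul_div,
        show ((Real.sin (t N) ^ 2) ^ s : ℝ) = ∏ i ∈ Finset.range s, Real.sin (t N) ^ 2 by
          rw [Finset.prod_const, Finset.card_range],
        ← Finset.prod_mul_distrib]
    have hC : Tendsto (fun N => (Real.cos (t N) ^ 2) ^ (k - s)) atTop (nhds 1) := by
      have := (hcos1.pow 2).pow (k - s)
      simpa using this
    have hcomb := (hA.const_mul (genBinom (a + k) (k - s) * (-1 : ℝ) ^ s)).mul hC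
    have hval : genBinom (a + k) (k - s) * (-1 : ℝ) ^ s * ((x ^ 2) ^ s / (s.factorial : ℝ)) * 1
        = (-1 : ℝ) ^ s * genBinom (a + k) (k - s) * (x ^ 2) ^ s / (s.factorial : ℝ) := by
      ring
    rw [← hval]
    refine hcomb.congr (fun N => ?_)
    have h2t : 2 * x / Real.sqrt (c N) = 2 * t N := by
      simp only [htdef]
      rw [mul_div_assoc]
    have hm : (Real.cos (2 * t N) - 1) / 2 = -(Real.sin (t N) ^ 2) := by
      rw [Real.cos_two_mul]
      have := Real.sin_sq_add_cos_sq (t N)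
      linarith
    have hp : (Real.cos (2 * t N) + 1) / 2 = Real.cos (t N) ^ 2 := by
      rw [Real.cos_two_mul]
      ring
    rw [h2t, hm, hp, neg_pow]
    ring
  rw [mul_comm (laguerreL a k (x ^ 2))]
  exact hcospow.mul hjac
end
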